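/- arXiv:cs/0101003 — 10 statements merged into one kernel-verified Lean document; each statement's English description precedes it below -/
import Mathlib

section
/- Consider the square waveguide mesh on ℤ². Let d : Fin 4 → ℤ² be the four unit directions d 0 = (1,0), d 1 = (−1,0), d 2 = (0,1), d 3 = (0,−1), and let op : Fin 4 → Fin 4 swap 0↔1 and 2↔3. Suppose p, q : ℤ² → Fin 4 → ℤ → ℝ (incoming and outgoing wave signals at each junction, branch, and time step) satisfy: (scattering) q x k n = (1/2)·∑_{j} p x j n − p x k n for all x, k, n; and (propagation with unit delay) p x k (n+1) = q (x + d k) (op k) n for all x, k, n. Define the junction signal s x n = (1/2)·∑_{k} p x k n. Then s satisfies the finite difference equation s x (n+1) + s x (n−1) = (1/2)·∑_{k} s (x + d k) n for all x ∈ ℤ² and all n ∈ ℤ. -/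
/-- The square waveguide mesh on `ℤ²`: with scattering
`q x k n = (1/2)·∑ⱼ p x j n − p x k n` at each 4-port junction and unit-delay
propagation `p x k (n+1) = q (x + d k) (op k) n` along the four unit directions,
the junction signal `s x n = (1/2)·∑ₖ p x k n` satisfies the finite difference
equation `s x (n+1) + s x (n−1) = (1/2)·∑ₖ s (x + d k) n`. -/
theorem stmt1 (d : Fin 4 → ℤ × ℤ)
    (hd : d = ![(1, 0), (-1, 0), (0, 1), (0, -1)])
    (op : Fin 4 → Fin 4) (hop : op = ![1, 0, 3, 2])
    (p q : ℤ × ℤ → Fin 4 → ℤ → ℝ)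
    (hscatter : ∀ x k n, q x k n = (1 / 2) * (∑ j, p x j n) - p x k n)
    (hprop : ∀ x k n, p x k (n + 1) = q (x + d k) (op k) n)
    (s : ℤ × ℤ → ℤ → ℝ) (hs : ∀ x n, s x n = (1 / 2) * ∑ k, p x k n) :
    ∀ (x : ℤ × ℤ) (n : ℤ),
      s x (n + 1) + s x (n - 1) = (1 / 2) * ∑ k, s (x + d k) n := by
  intro x n
  subst hd hop
  -- back-propagation: p at a neighbor expressed via q at x
  have hback : ∀ k : Fin 4,
      p (x + ![(1, 0), (-1, 0), (0, 1), (0, -1)] k) (![1, 0, 3, 2] k) n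
        = q x k (n - 1) := by
    intro k
    have h := hprop (x + ![(1, 0), (-1, 0), (0, 1), (0, -1)] k)
        (![1, 0, 3, 2] k) (n - 1)
    rw [sub_add_cancel] at h
    rw [h]
    fin_cases k <;> simp <;> rw [add_assoc] <;> norm_num [Prod.mk_add_mk, Prod.mk_zero_zero]
  have hfwd : ∀ k : Fin 4,
      p x k (n + 1)
        = q (x + ![(1, 0), (-1, 0), (0, 1), (0, -1)] k) (![1, 0, 3, 2] k) n :=
    fun k => hprop x k n
  simp only [hs, hfwd, hback, hscatter, Fin.sum_univ_four]
  ring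
end

section
/- Let D > 0, let ξ = (ξ_x, ξ_y) ∈ ℝ², let θ ∈ ℝ, and let v₁,…,v₆ ∈ ℝ² be the six vectors of length D in directions at angles kπ/3, k = 0,…,5 (i.e. ±D(1,0), ±D(1/2, √3/2), ±D(1/2, −√3/2)). Define the plane wave f : ℝ² → ℤ → ℂ by f x n = exp(i·(2π·⟨ξ, x⟩ − θ·n)). Then f satisfies the triangular-mesh difference equation f x (n+1) + f x (n−1) = (1/3)·∑_{k=1}^{6} f (x + v_k) n for all x ∈ ℝ² and n ∈ ℤ if and only if 2·cos θ = b_t(ξ_x, ξ_y), where b_t(ξ_x, ξ_y) = (2/3)·[cos(2πD·ξ_x) + cos(2πD·(ξ_x/2 + (√3/2)·ξ_y)) + cos(2πD·(ξ_x/2 − (√3/2)·ξ_y))]. -/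
open Real

lemma two_cos_aux (u : ℝ) : Complex.exp (Complex.I * u) + Complex.exp (Complex.I * (-(u:ℂ))) =
    2 * (Real.cos u : ℂ) := by
  rw [show Complex.I * (u:ℂ) = (u:ℂ) * Complex.I by ring,
    show Complex.I * (-(u:ℂ)) = (-(u:ℂ)) * Complex.I by ring,
    Complex.exp_mul_I, Complex.exp_mul_I, Complex.cos_neg, Complex.sin_neg,
    Complex.ofReal_cos]
  ring

/-- The plane wave `f x n = exp(i·(2π·⟨ξ, x⟩ − θ·n))` satisfies the triangular-mesh
difference equation `f x (n+1) + f x (n−1) = (1/3)·∑_{k=1}^{6} f (x + vₖ) n`, where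
`v₁,…,v₆` are the six vectors of length `D` at angles `kπ/3`, iff
`2·cos θ = b_t(ξ_x, ξ_y)`, the geometric factor of the triangular mesh. -/
theorem stmt3 (D ξx ξy θ : ℝ) (hD : 0 < D)
    (v : Fin 6 → ℝ × ℝ)
    (hv : v = ![(D, 0), (-D, 0), (D / 2, Real.sqrt 3 / 2 * D),
      (-(D / 2), -(Real.sqrt 3 / 2 * D)), (D / 2, -(Real.sqrt 3 / 2 * D)),
      (-(D / 2), Real.sqrt 3 / 2 * D)])
    (f : ℝ × ℝ → ℤ → ℂ)
    (hf : ∀ x n, f x n = Complex.exp (Complex.I *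
      ((2 * (π : ℂ) * ((ξx : ℂ) * (x.1 : ℂ) + (ξy : ℂ) * (x.2 : ℂ))) - (θ : ℂ) * (n : ℂ)))) :
    (∀ (x : ℝ × ℝ) (n : ℤ), f x (n + 1) + f x (n - 1) = (1 / 3) * ∑ k, f (x + v k) n) ↔
    2 * Real.cos θ = (2 / 3) * (Real.cos (2 * π * D * ξx) +
      Real.cos (2 * π * D * (ξx / 2 + Real.sqrt 3 / 2 * ξy)) +
      Real.cos (2 * π * D * (ξx / 2 - Real.sqrt 3 / 2 * ξy))) := by
  have key : ∀ (x : ℝ × ℝ) (n : ℤ),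
      (f x (n + 1) + f x (n - 1) = (1 / 3) * ∑ k, f (x + v k) n) ↔
      (2 * Real.cos θ = (2 / 3) * (Real.cos (2 * π * D * ξx) +
        Real.cos (2 * π * D * (ξx / 2 + Real.sqrt 3 / 2 * ξy)) +
        Real.cos (2 * π * D * (ξx / 2 - Real.sqrt 3 / 2 * ξy)))) := by
    intro x n
    set E : ℂ := Complex.exp (Complex.I *
      ((2 * (π : ℂ) * ((ξx : ℂ) * (x.1 : ℂ) + (ξy : ℂ) * (x.2 : ℂ))) - (θ : ℂ) * (n : ℂ)))
      with hE
    have hE0 : E ≠ 0 := Complex.exp_ne_zero _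
    have e1 : f x (n + 1) = E * Complex.exp (Complex.I * (-(θ:ℂ))) := by
      rw [hf, hE, ← Complex.exp_add]; congr 1; push_cast; ring
    have e2 : f x (n - 1) = E * Complex.exp (Complex.I * (θ:ℂ)) := by
      rw [hf, hE, ← Complex.exp_add]; congr 1; push_cast; ring
    have hL : f x (n + 1) + f x (n - 1) = E * (2 * (Real.cos θ : ℂ)) := by
      rw [e1, e2, ← two_cos_aux θ]; ring
    have hterm : ∀ (w : ℝ × ℝ), f (x + w) n =
        E * Complex.exp (Complex.I * ((2 * π * (ξx * w.1 + ξy * w.2) : ℝ) : ℂ)) := by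
      intro w
      rw [hf, hE, ← Complex.exp_add]
      congr 1
      simp only [Prod.fst_add, Prod.snd_add]
      push_cast
      ring
    have targ : ∀ (k : Fin 6) (w : ℝ × ℝ) (a : ℝ), v k = w →
        (2 * π * (ξx * w.1 + ξy * w.2)) = a →
        f (x + v k) n = E * Complex.exp (Complex.I * (a : ℂ)) := by
      intro k w a hw ha; rw [hw, hterm, ha]
    set A := 2 * π * D * ξx with hA
    set B := 2 * π * D * (ξx / 2 + Real.sqrt 3 / 2 * ξy) with hB
    set C := 2 * π * D * (ξx / 2 - Real.sqrt 3 / 2 * ξy) with hC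
    have t0 := targ 0 (D, 0) A (by rw [hv]; rfl) (by rw [hA]; ring)
    have t1 := targ 1 (-D, 0) (-A) (by rw [hv]; rfl) (by rw [hA]; ring)
    have t2 := targ 2 (D / 2, Real.sqrt 3 / 2 * D) B (by rw [hv]; rfl) (by rw [hB]; ring)
    have t3 := targ 3 (-(D / 2), -(Real.sqrt 3 / 2 * D)) (-B) (by rw [hv]; rfl)
      (by rw [hB]; ring)
    have t4 := targ 4 (D / 2, -(Real.sqrt 3 / 2 * D)) C (by rw [hv]; rfl) (by rw [hC]; ring)
    have t5 := targ 5 (-(D / 2), Real.sqrt 3 / 2 * D) (-C) (by rw [hv]; rfl)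
      (by rw [hC]; ring)
    have hR : (1 / 3 : ℂ) * ∑ k, f (x + v k) n =
        E * (((2 / 3 : ℝ) * (Real.cos A + Real.cos B + Real.cos C) : ℝ) : ℂ) := by
      rw [Fin.sum_univ_six, t0, t1, t2, t3, t4, t5]
      have c1 := two_cos_aux A
      have c2 := two_cos_aux B
      have c3 := two_cos_aux C
      simp only [Complex.ofReal_neg, Complex.ofReal_mul, Complex.ofReal_add,
        Complex.ofReal_sub, Complex.ofReal_div, Complex.ofReal_ofNat]
      linear_combination (E / 3) * c1 + (E / 3) * c2 + (E / 3) * c3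
    rw [hL, hR]
    constructor
    · intro h
      have := mul_left_cancel₀ hE0 h
      exact_mod_cast this
    · intro h
      congr 1
      exact_mod_cast h
  constructor
  · intro h
    exact (key (0, 0) 0).mp (h (0, 0) 0)
  · intro h x n
    exact (key x n).mpr h
end

section
/- Let D > 0 and define the dispersion ratio of the square waveguide mesh by k_s(ξ_x, ξ_y) = (1/(2πD·√(ξ_x² + ξ_y²)))·arctan(√(4 − b_s(ξ_x,ξ_y)²)/b_s(ξ_x,ξ_y)), where b_s(ξ_x, ξ_y) = cos(2πD·ξ_x) + cos(2πD·ξ_y). Then for every ξ₀ with 0 < ξ₀ < 1/(4D), one has k_s(ξ₀, ξ₀) = 1/√2 exactly; that is, the square mesh introduces no dispersion error along the diagonal direction ξ_x = ξ_y. -/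
open Real

/-- The dispersion ratio of the square waveguide mesh is exactly `1/√2` along the
diagonal direction `ξ_x = ξ_y` (below the Nyquist limit): the square mesh introduces
no dispersion error along the diagonal. -/
theorem stmt5 (D : ℝ) (hD : 0 < D)
    (b : ℝ → ℝ → ℝ)
    (hb : ∀ ξx ξy, b ξx ξy = Real.cos (2 * π * D * ξx) + Real.cos (2 * π * D * ξy))
    (k : ℝ → ℝ → ℝ)
    (hk : ∀ ξx ξy, k ξx ξy = (1 / (2 * π * D * Real.sqrt (ξx ^ 2 + ξy ^ 2))) *
      Real.arctan (Real.sqrt (4 - (b ξx ξy) ^ 2) / b ξx ξy)) :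
    ∀ ξ₀ : ℝ, 0 < ξ₀ → ξ₀ < 1 / (4 * D) → k ξ₀ ξ₀ = 1 / Real.sqrt 2 := by
  intro ξ₀ h1 h2
  have hπ := Real.pi_pos
  set θ := 2 * π * D * ξ₀ with hθ
  have hθpos : 0 < θ := by positivity
  have hθlt : θ < π / 2 := by
    have : ξ₀ * (4 * D) < 1 := by
      rw [← lt_div_iff₀ (by positivity)]; exact h2
    nlinarith
  have hcos : 0 < Real.cos θ := Real.cos_pos_of_mem_Ioo ⟨by linarith, hθlt⟩
  have hsin : 0 ≤ Real.sin θ := Real.sin_nonneg_of_nonneg_of_le_pi (le_of_lt hθpos) (by linarith)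
  have hbv : b ξ₀ ξ₀ = 2 * Real.cos θ := by rw [hb]; ring
  have hsq : Real.sqrt (4 - (b ξ₀ ξ₀) ^ 2) = 2 * Real.sin θ := by
    rw [hbv]
    have : 4 - (2 * Real.cos θ) ^ 2 = (2 * Real.sin θ) ^ 2 := by
      have := Real.sin_sq_add_cos_sq θ; nlinarith
    rw [this, Real.sqrt_sq (by positivity)]
  have harg : Real.sqrt (4 - (b ξ₀ ξ₀) ^ 2) / b ξ₀ ξ₀ = Real.tan θ := by
    rw [hsq, hbv, Real.tan_eq_sin_div_cos]
    field_simp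
  have hξsq : Real.sqrt (ξ₀ ^ 2 + ξ₀ ^ 2) = ξ₀ * Real.sqrt 2 := by
    rw [show ξ₀ ^ 2 + ξ₀ ^ 2 = ξ₀ ^ 2 * 2 by ring, Real.sqrt_mul (by positivity),
      Real.sqrt_sq h1.le]
  have hs2 : (0:ℝ) < Real.sqrt 2 := by positivity
  rw [hk, harg, Real.arctan_tan (by linarith) hθlt, hξsq, hθ]
  field_simp
end

section
/- Let D > 0 and let (u, v) ∈ ℝ² with u² + v² = 1. Define b_s(ξ_x, ξ_y) = cos(2πD·ξ_x) + cos(2πD·ξ_y). Then the dispersion ratio of the square waveguide mesh along the direction (u, v) tends to 1/√2 at dc: the function t ↦ (1/(2πD·t))·arctan(√(4 − b_s(t·u, t·v)²)/b_s(t·u, t·v)) tends to 1/√2 as t → 0⁺. -/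
open Real Filter

private lemma sin_div_lim : Filter.Tendsto (fun x : ℝ => Real.sin x / x)
    (nhdsWithin 0 {0}ᶜ) (nhds 1) := by
  have h := (Real.hasDerivAt_sin 0)
  rw [hasDerivAt_iff_tendsto_slope] at h
  simp only [Real.cos_zero] at h
  refine h.congr' ?_
  filter_upwards with x
  simp [slope_fun_def, Real.sin_zero, div_eq_inv_mul]

private lemma arctan_div_lim : Filter.Tendsto (fun x : ℝ => Real.arctan x / x)
    (nhdsWithin 0 {0}ᶜ) (nhds 1) := by
  have h := (Real.hasDerivAt_arctan 0)
  rw [hasDerivAt_iff_tendsto_slope] at h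
  norm_num at h
  refine h.congr' ?_
  filter_upwards with x
  simp [slope_fun_def, Real.arctan_zero, div_eq_inv_mul]

private lemma one_sub_cos_lim (c : ℝ) : Filter.Tendsto
    (fun t : ℝ => (1 - Real.cos (c * t)) / t ^ 2)
    (nhdsWithin 0 (Set.Ioi 0)) (nhds (c ^ 2 / 2)) := by
  rcases eq_or_ne c 0 with rfl | hc
  · simp only [zero_mul, Real.cos_zero, sub_self, zero_div]
    simpa using tendsto_const_nhds
  · have key : ∀ x : ℝ, 1 - Real.cos x = 2 * Real.sin (x / 2) ^ 2 := by
      intro x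
      have := Real.sin_sq_eq_half_sub (x / 2)
      rw [show 2 * (x / 2) = x by ring] at this
      rw [this]; ring
    have hcomp : Filter.Tendsto (fun t : ℝ => c * t / 2)
        (nhdsWithin 0 (Set.Ioi 0)) (nhdsWithin 0 {0}ᶜ) := by
      rw [tendsto_nhdsWithin_iff]
      constructor
      · have : Continuous (fun t : ℝ => c * t / 2) := by continuity
        simpa using (this.tendsto 0).mono_left nhdsWithin_le_nhds
      · filter_upwards [self_mem_nhdsWithin] with t ht
        simp only [Set.mem_Ioi] at ht
        simp only [Set.mem_compl_iff, Set.mem_singleton_iff]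
        positivity
    have hsin : Filter.Tendsto (fun t : ℝ => Real.sin (c * t / 2) / (c * t / 2))
        (nhdsWithin 0 (Set.Ioi 0)) (nhds 1) := sin_div_lim.comp hcomp
    have h2 : Filter.Tendsto (fun t : ℝ => 2 * (c / 2 * (Real.sin (c * t / 2) / (c * t / 2))) ^ 2)
        (nhdsWithin 0 (Set.Ioi 0)) (nhds (2 * (c / 2 * 1) ^ 2)) := by
      exact (tendsto_const_nhds.mul ((tendsto_const_nhds.mul hsin).pow 2))
    have heq : (2 : ℝ) * (c / 2 * 1) ^ 2 = c ^ 2 / 2 := by ring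
    rw [heq] at h2
    refine h2.congr' ?_
    filter_upwards [self_mem_nhdsWithin] with t ht
    simp only [Set.mem_Ioi] at ht
    rw [key (c * t)]
    have ht' : t ≠ 0 := ne_of_gt ht
    field_simp

/-- The dispersion ratio of the square waveguide mesh along any unit direction `(u, v)`
tends to `1/√2` at dc. -/
theorem stmt6 (D u v : ℝ) (hD : 0 < D) (huv : u ^ 2 + v ^ 2 = 1)
    (b : ℝ → ℝ → ℝ)
    (hb : ∀ ξx ξy, b ξx ξy = Real.cos (2 * π * D * ξx) + Real.cos (2 * π * D * ξy)) :
    Filter.Tendsto (fun t : ℝ => (1 / (2 * π * D * t)) *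
        Real.arctan (Real.sqrt (4 - (b (t * u) (t * v)) ^ 2) / b (t * u) (t * v)))
      (nhdsWithin 0 (Set.Ioi 0)) (nhds (1 / Real.sqrt 2)) := by
  have hπ : 0 < π := Real.pi_pos
  set a : ℝ := 2 * π * D with ha_def
  have ha : 0 < a := by positivity
  set B : ℝ → ℝ := fun t => b (t * u) (t * v) with hB_def
  have hB_eq : ∀ t, B t = Real.cos (a * u * t) + Real.cos (a * v * t) := by
    intro t
    simp only [hB_def, hb]
    rw [show 2 * π * D * (t * u) = a * u * t by rw [ha_def]; ring,
        show 2 * π * D * (t * v) = a * v * t by rw [ha_def]; ring]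
  set r : ℝ → ℝ := fun t => (1 - Real.cos (a * u * t)) / t ^ 2
      + (1 - Real.cos (a * v * t)) / t ^ 2 with hr_def
  have hr : Filter.Tendsto r (nhdsWithin 0 (Set.Ioi 0)) (nhds (a ^ 2 / 2)) := by
    have := (one_sub_cos_lim (a * u)).add (one_sub_cos_lim (a * v))
    have heq : (a * u) ^ 2 / 2 + (a * v) ^ 2 / 2 = a ^ 2 / 2 := by
      have h1 : (a * u) ^ 2 / 2 + (a * v) ^ 2 / 2 = a ^ 2 * (u ^ 2 + v ^ 2) / 2 := by ring
      rw [h1, huv, mul_one]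
    rwa [heq] at this
  have hBlim : Filter.Tendsto B (nhdsWithin 0 (Set.Ioi 0)) (nhds 2) := by
    have hc : Continuous (fun t : ℝ => Real.cos (a * u * t) + Real.cos (a * v * t)) := by
      continuity
    have := (hc.tendsto 0).mono_left (nhdsWithin_le_nhds (s := Set.Ioi (0:ℝ)))
    simp only [mul_zero, Real.cos_zero] at this
    norm_num at this
    exact this.congr (fun t => (hB_eq t).symm)
  -- eventual positivity facts
  have ev_t : ∀ᶠ t : ℝ in nhdsWithin 0 (Set.Ioi 0), 0 < t := by
    filter_upwards [self_mem_nhdsWithin] with t ht using ht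
  have ev_r : ∀ᶠ t in nhdsWithin 0 (Set.Ioi 0), 0 < r t :=
    hr.eventually_const_lt (by positivity)
  have ev_B : ∀ᶠ t in nhdsWithin 0 (Set.Ioi 0), 0 < B t :=
    hBlim.eventually_const_lt (by norm_num)
  have key_id : ∀ t : ℝ, t ≠ 0 → 2 - B t = t ^ 2 * r t := by
    intro t ht
    rw [hB_eq, hr_def]
    field_simp
    ring
  have ev_Blt : ∀ᶠ t in nhdsWithin 0 (Set.Ioi 0), B t < 2 := by
    filter_upwards [ev_t, ev_r] with t ht hrt
    have := key_id t (ne_of_gt ht)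
    nlinarith [mul_pos (pow_pos ht 2) hrt]
  -- q tends to 2
  set q : ℝ → ℝ := fun t => (2 + B t) * r t / a ^ 2 with hq_def
  have hq : Filter.Tendsto q (nhdsWithin 0 (Set.Ioi 0)) (nhds 2) := by
    have := (((tendsto_const_nhds (x := (2:ℝ)) (f := nhdsWithin (0:ℝ) (Set.Ioi 0))).add hBlim).mul hr).div_const (a ^ 2)
    have heq : (2 + 2) * (a ^ 2 / 2) / a ^ 2 = 2 := by
      field_simp
      ring
    rwa [heq] at this
  have hsqB : Filter.Tendsto (fun t => Real.sqrt (q t) / B t)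
      (nhdsWithin 0 (Set.Ioi 0)) (nhds (Real.sqrt 2 / 2)) :=
    ((Real.continuous_sqrt.tendsto 2).comp hq).div hBlim (by norm_num)
  -- h tends to 0 within {0}ᶜ
  set h : ℝ → ℝ := fun t => Real.sqrt (4 - B t ^ 2) / B t with hh_def
  have ev_h : ∀ᶠ t in nhdsWithin 0 (Set.Ioi 0), 0 < h t := by
    filter_upwards [ev_B, ev_Blt] with t hB1 hB2
    have h4 : 0 < 4 - B t ^ 2 := by nlinarith
    have := Real.sqrt_pos.mpr h4
    positivity
  have hh0 : Filter.Tendsto h (nhdsWithin 0 (Set.Ioi 0)) (nhdsWithin 0 {0}ᶜ) := by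
    rw [tendsto_nhdsWithin_iff]
    constructor
    · have hnum : Filter.Tendsto (fun t => Real.sqrt (4 - B t ^ 2))
          (nhdsWithin 0 (Set.Ioi 0)) (nhds 0) := by
        have : Filter.Tendsto (fun t => 4 - B t ^ 2) (nhdsWithin 0 (Set.Ioi 0)) (nhds 0) := by
          have := (tendsto_const_nhds (x := (4:ℝ)) (f := nhdsWithin (0:ℝ) (Set.Ioi 0))).sub (hBlim.pow 2)
          norm_num at this
          exact this
        have := (Real.continuous_sqrt.tendsto 0).comp this
        simpa [Function.comp_def] using this
      have := hnum.div hBlim (by norm_num)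
      norm_num at this
      exact this
    · filter_upwards [ev_h] with t ht
      simp only [Set.mem_compl_iff, Set.mem_singleton_iff]
      exact ne_of_gt ht
  have harct : Filter.Tendsto (fun t => Real.arctan (h t) / h t)
      (nhdsWithin 0 (Set.Ioi 0)) (nhds 1) := arctan_div_lim.comp hh0
  -- combine
  have hprod := harct.mul hsqB
  rw [one_mul] at hprod
  have hfinal : Real.sqrt 2 / 2 = 1 / Real.sqrt 2 := by
    rw [eq_div_iff (by positivity : Real.sqrt 2 ≠ 0)]
    rw [div_mul_eq_mul_div, Real.mul_self_sqrt (by norm_num : (2:ℝ) ≥ 0)]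
    norm_num
  rw [hfinal] at hprod
  refine hprod.congr' ?_
  filter_upwards [ev_t, ev_B, ev_Blt, ev_r, ev_h] with t ht hB1 hB2 hrt hht
  have ht' : t ≠ 0 := ne_of_gt ht
  have hat : 0 < a * t := by positivity
  have h4 : 0 ≤ 4 - B t ^ 2 := by nlinarith
  -- q t = (4 - B t ^ 2) / (a * t) ^ 2
  have hqeq : q t = (4 - B t ^ 2) / (a * t) ^ 2 := by
    rw [hq_def]
    simp only
    have h2B := key_id t ht'
    have : r t = (2 - B t) / t ^ 2 := by
      rw [h2B]; field_simp
    rw [this]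
    field_simp
    ring
  have hsqrt : Real.sqrt (q t) = Real.sqrt (4 - B t ^ 2) / (a * t) := by
    rw [hqeq, Real.sqrt_div h4, Real.sqrt_sq (le_of_lt hat)]
  show Real.arctan (h t) / h t * (Real.sqrt (q t) / B t) = 1 / (a * t) * Real.arctan (h t)
  have hhne : h t ≠ 0 := ne_of_gt hht
  have hs : Real.sqrt (q t) / B t = h t / (a * t) := by
    rw [hsqrt, hh_def]; ring
  rw [hs]
  field_simp
end

section
/- Let D > 0 and let (u, v) ∈ ℝ² with u² + v² = 1. Define b_t(ξ_x, ξ_y) = (2/3)·[cos(2πD·ξ_x) + cos(2πD·(ξ_x/2 + (√3/2)·ξ_y)) + cos(2πD·(ξ_x/2 − (√3/2)·ξ_y))]. Then the dispersion ratio of the triangular waveguide mesh along the direction (u, v) tends to 1/√2 at dc: the function t ↦ (1/(2πD·t))·arctan(√(4 − b_t(t·u, t·v)²)/b_t(t·u, t·v)) tends to 1/√2 as t → 0⁺. -/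
open Real Filter

private lemma cos_lim (a : ℝ) :
    Tendsto (fun t : ℝ => (1 - Real.cos (a * t)) / t ^ 2) (nhdsWithin 0 (Set.Ioi 0))
      (nhds (a ^ 2 / 2)) := by
  rw [← tendsto_sub_nhds_zero_iff]
  have hbnd : Tendsto (fun t : ℝ => a ^ 4 * (5 / 96) * t ^ 2)
      (nhdsWithin 0 (Set.Ioi 0)) (nhds 0) := by
    have h : Continuous fun t : ℝ => a ^ 4 * (5 / 96) * t ^ 2 := by continuity
    have := (h.tendsto 0).mono_left (nhdsWithin_le_nhds (s := Set.Ioi (0:ℝ)))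
    simpa using this
  apply squeeze_zero_norm' _ hbnd
  have hsmall : ∀ᶠ t in nhdsWithin (0:ℝ) (Set.Ioi 0), |a * t| ≤ 1 := by
    have hc : Continuous fun t : ℝ => |a * t| := by continuity
    have h := ((hc.tendsto 0).mono_left (nhdsWithin_le_nhds (s := Set.Ioi (0:ℝ))))
    simp only [mul_zero, abs_zero] at h
    filter_upwards [h.eventually_lt_const (by norm_num : (0:ℝ) < 1)] with t ht
    exact ht.le
  filter_upwards [hsmall, self_mem_nhdsWithin] with t hta (ht : (0:ℝ) < t)
  have ht0 : t ≠ 0 := ne_of_gt ht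
  have hcb := Real.cos_bound hta
  have heq : (1 - Real.cos (a * t)) / t ^ 2 - a ^ 2 / 2
      = -((Real.cos (a * t) - (1 - (a * t) ^ 2 / 2)) / t ^ 2) := by
    field_simp
    ring
  rw [heq, norm_neg, norm_div, Real.norm_eq_abs, Real.norm_eq_abs,
    abs_of_pos (by positivity : (0:ℝ) < t ^ 2)]
  calc |Real.cos (a * t) - (1 - (a * t) ^ 2 / 2)| / t ^ 2
      ≤ (|a * t| ^ 4 * (5 / 96)) / t ^ 2 := by gcongr
    _ = a ^ 4 * (5 / 96) * t ^ 2 := by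
        rw [← abs_pow, abs_of_nonneg (by positivity : (0:ℝ) ≤ (a * t) ^ 4)]
        field_simp

set_option maxHeartbeats 1000000 in
/-- The dispersion ratio of the triangular waveguide mesh along any unit direction `(u, v)`
tends to `1/√2` at dc. -/
theorem stmt7 (D u v : ℝ) (hD : 0 < D) (huv : u ^ 2 + v ^ 2 = 1)
    (b : ℝ → ℝ → ℝ)
    (hb : ∀ ξx ξy, b ξx ξy = (2 / 3) * (Real.cos (2 * π * D * ξx) +
      Real.cos (2 * π * D * (ξx / 2 + Real.sqrt 3 / 2 * ξy)) +
      Real.cos (2 * π * D * (ξx / 2 - Real.sqrt 3 / 2 * ξy)))) :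
    Filter.Tendsto (fun t : ℝ => (1 / (2 * π * D * t)) *
        Real.arctan (Real.sqrt (4 - (b (t * u) (t * v)) ^ 2) / b (t * u) (t * v)))
      (nhdsWithin 0 (Set.Ioi 0)) (nhds (1 / Real.sqrt 2)) := by
  have hπ := Real.pi_pos
  set c : ℝ := 2 * π * D with hcdef
  have hc : 0 < c := by positivity
  set B : ℝ → ℝ := fun t => b (t * u) (t * v) with hBdef
  set w₁ : ℝ := u / 2 + Real.sqrt 3 / 2 * v with hw1
  set w₂ : ℝ := u / 2 - Real.sqrt 3 / 2 * v with hw2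
  suffices h : Tendsto (fun t : ℝ => (1 / (c * t)) *
      Real.arctan (Real.sqrt (4 - (B t) ^ 2) / B t))
      (nhdsWithin 0 (Set.Ioi 0)) (nhds (1 / Real.sqrt 2)) by
    simpa [hBdef] using h
  have hBform : ∀ t : ℝ, B t = (2 / 3) * (Real.cos (c * u * t)
      + Real.cos (c * w₁ * t) + Real.cos (c * w₂ * t)) := by
    intro t
    rw [hw1, hw2]
    rw [hBdef]
    simp only [hb]
    ring_nf
  have h3 : (Real.sqrt 3) ^ 2 = 3 := Real.sq_sqrt (by norm_num)
  have hsum : u ^ 2 + w₁ ^ 2 + w₂ ^ 2 = 3 / 2 := by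
    rw [hw1, hw2]
    nlinarith [h3, huv]
  -- key: (2 - B t)/t² → c²/2
  have hkey : Tendsto (fun t : ℝ => (2 - B t) / t ^ 2)
      (nhdsWithin 0 (Set.Ioi 0)) (nhds (c ^ 2 / 2)) := by
    have H := (((cos_lim (c * u)).add (cos_lim (c * w₁))).add (cos_lim (c * w₂))).const_mul
      (2 / 3 : ℝ)
    have hval : (2 / 3 : ℝ) * ((c * u) ^ 2 / 2 + (c * w₁) ^ 2 / 2 + (c * w₂) ^ 2 / 2)
        = c ^ 2 / 2 := by linear_combination (c ^ 2 / 3) * hsum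
    rw [hval] at H
    refine H.congr' ?_
    filter_upwards [self_mem_nhdsWithin] with t (ht : (0:ℝ) < t)
    have ht0 : t ≠ 0 := ne_of_gt ht
    rw [hBform t]
    field_simp
    ring
  -- B → 2
  have hB2 : Tendsto B (nhdsWithin 0 (Set.Ioi 0)) (nhds 2) := by
    have hsq : Tendsto (fun t : ℝ => t ^ 2) (nhdsWithin (0:ℝ) (Set.Ioi 0)) (nhds 0) := by
      have := ((continuous_pow 2).tendsto (0:ℝ)).mono_left (nhdsWithin_le_nhds (s := Set.Ioi (0:ℝ)))
      simpa using this
    have h := hkey.mul hsq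
    rw [mul_zero] at h
    have h' : Tendsto (fun t : ℝ => 2 - B t) (nhdsWithin 0 (Set.Ioi 0)) (nhds 0) := by
      refine h.congr' ?_
      filter_upwards [self_mem_nhdsWithin] with t (ht : (0:ℝ) < t)
      field_simp
    have h2 : Tendsto (fun t : ℝ => 2 - (2 - B t)) (nhdsWithin 0 (Set.Ioi 0))
        (nhds (2 - 0)) := (tendsto_const_nhds (x := (2:ℝ))).sub h'
    simpa using h2
  -- eventual positivity facts
  have hBlt2 : ∀ᶠ t in nhdsWithin (0:ℝ) (Set.Ioi 0), B t < 2 := by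
    filter_upwards [hkey.eventually_const_lt (by positivity : (0:ℝ) < c ^ 2 / 2),
      self_mem_nhdsWithin] with t ht (ht' : (0:ℝ) < t)
    have ht2 : (0:ℝ) < t ^ 2 := by positivity
    have h2 := mul_pos ht ht2
    rw [div_mul_cancel₀ _ (ne_of_gt ht2)] at h2
    linarith
  have hBpos : ∀ᶠ t in nhdsWithin (0:ℝ) (Set.Ioi 0), 0 < B t :=
    hB2.eventually_const_lt (by norm_num : (0:ℝ) < 2)
  have hBsq4 : ∀ t : ℝ, (B t) ^ 2 ≤ 4 := by
    intro t
    rw [hBform t]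
    nlinarith [Real.neg_one_le_cos (c * u * t), Real.cos_le_one (c * u * t),
      Real.neg_one_le_cos (c * w₁ * t), Real.cos_le_one (c * w₁ * t),
      Real.neg_one_le_cos (c * w₂ * t), Real.cos_le_one (c * w₂ * t)]
  -- sqrt(4 - B²)/t → √2 c
  have hsqrt : Tendsto (fun t : ℝ => Real.sqrt (4 - (B t) ^ 2) / t)
      (nhdsWithin 0 (Set.Ioi 0)) (nhds (Real.sqrt 2 * c)) := by
    have h4 : Tendsto (fun t : ℝ => (4 - (B t) ^ 2) / t ^ 2)
        (nhdsWithin 0 (Set.Ioi 0)) (nhds (2 * c ^ 2)) := by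
      have H := hkey.mul (hB2.const_add 2)
      have : (c ^ 2 / 2) * (2 + 2) = 2 * c ^ 2 := by ring
      rw [this] at H
      refine H.congr' ?_
      filter_upwards [self_mem_nhdsWithin] with t (ht : (0:ℝ) < t)
      have ht0 : t ≠ 0 := ne_of_gt ht
      field_simp
      ring
    have Hs := (Real.continuous_sqrt.tendsto (2 * c ^ 2)).comp h4
    have hv : Real.sqrt (2 * c ^ 2) = Real.sqrt 2 * c := by
      rw [Real.sqrt_mul (by norm_num) (c ^ 2), Real.sqrt_sq hc.le]
    rw [hv] at Hs
    refine Hs.congr' ?_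
    filter_upwards [self_mem_nhdsWithin] with t (ht : (0:ℝ) < t)
    show Real.sqrt ((4 - (B t) ^ 2) / t ^ 2) = Real.sqrt (4 - (B t) ^ 2) / t
    rw [Real.sqrt_div (by linarith [hBsq4 t]) (t ^ 2), Real.sqrt_sq ht.le]
  -- G := sqrt(4-B²)/B → 0
  have hnum : Tendsto (fun t : ℝ => Real.sqrt (4 - (B t) ^ 2))
      (nhdsWithin 0 (Set.Ioi 0)) (nhds 0) := by
    have h0 : Tendsto (fun t : ℝ => 4 - (B t) ^ 2) (nhdsWithin 0 (Set.Ioi 0)) (nhds 0) := by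
      have h4 : Tendsto (fun t : ℝ => 4 - (B t) ^ 2) (nhdsWithin 0 (Set.Ioi 0))
          (nhds (4 - 2 ^ 2)) := (tendsto_const_nhds (x := (4:ℝ))).sub (hB2.pow 2)
      norm_num at h4
      exact h4
    have := (Real.continuous_sqrt.tendsto 0).comp h0
    rw [Real.sqrt_zero] at this
    exact this
  have hG0 : Tendsto (fun t : ℝ => Real.sqrt (4 - (B t) ^ 2) / B t)
      (nhdsWithin 0 (Set.Ioi 0)) (nhds 0) := by
    have := hnum.div hB2 (by norm_num)
    rw [zero_div] at this
    exact this
  have hGpos : ∀ᶠ t in nhdsWithin (0:ℝ) (Set.Ioi 0),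
      0 < Real.sqrt (4 - (B t) ^ 2) / B t := by
    filter_upwards [hBlt2, hBpos] with t h2 hp
    exact div_pos (Real.sqrt_pos.2 (by nlinarith)) hp
  -- arctan G / G → 1
  have harctan : Tendsto (fun t : ℝ =>
      Real.arctan (Real.sqrt (4 - (B t) ^ 2) / B t) / (Real.sqrt (4 - (B t) ^ 2) / B t))
      (nhdsWithin 0 (Set.Ioi 0)) (nhds 1) := by
    have hd := (Real.hasDerivAt_arctan 0)
    rw [hasDerivAt_iff_tendsto_slope] at hd
    have hG' : Tendsto (fun t : ℝ => Real.sqrt (4 - (B t) ^ 2) / B t)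
        (nhdsWithin 0 (Set.Ioi 0)) (nhdsWithin 0 {(0:ℝ)}ᶜ) := by
      rw [tendsto_nhdsWithin_iff]
      refine ⟨hG0, ?_⟩
      filter_upwards [hGpos] with t ht
      exact ne_of_gt ht
    have := hd.comp hG'
    simp only [Function.comp_def, slope_def_field, Real.arctan_zero, sub_zero,
      div_eq_mul_inv] at this ⊢
    norm_num at this
    convert this using 2
    rw [mul_inv_rev, inv_inv]
  -- G / t → √2 c / 2
  have hGt : Tendsto (fun t : ℝ => (Real.sqrt (4 - (B t) ^ 2) / t) / B t)
      (nhdsWithin 0 (Set.Ioi 0)) (nhds (Real.sqrt 2 * c / 2)) :=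
    hsqrt.div hB2 (by norm_num)
  -- assemble
  have hfinal := (harctan.mul hGt).mul_const (1 / c)
  have hval : 1 * (Real.sqrt 2 * c / 2) * (1 / c) = 1 / Real.sqrt 2 := by
    have h2 : Real.sqrt 2 * Real.sqrt 2 = 2 := Real.mul_self_sqrt (by norm_num)
    have hs2 : (0:ℝ) < Real.sqrt 2 := by positivity
    field_simp
    linear_combination h2
  rw [hval] at hfinal
  refine hfinal.congr' ?_
  filter_upwards [hGpos, hBpos, self_mem_nhdsWithin] with t hG hBp (ht : (0:ℝ) < t)
  have ht0 : t ≠ 0 := ne_of_gt ht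
  have hB0 : B t ≠ 0 := ne_of_gt hBp
  have hsq0 : Real.sqrt (4 - (B t) ^ 2) ≠ 0 := by
    have h := mul_pos hG hBp
    rw [div_mul_cancel₀ _ hB0] at h
    exact ne_of_gt h
  have hc0 : c ≠ 0 := ne_of_gt hc
  field_simp
end

section
/- Let D > 0 and B > 0, and let L_t* be the set of all integer linear combinations of (1/D, −1/(√3·D)) and (0, 2/(√3·D)) in ℝ². The open Euclidean balls of radius B centered at the points of L_t* are pairwise disjoint if and only if D ≤ 1/(√3·B). In particular, a signal with circular spatial band of radius B is sampled without aliasing by the triangular waveguide mesh exactly when its waveguide length satisfies D ≤ 1/(√3·B), with critical length D_t = 1/(√3·B). -/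
lemma intkey (k l : ℤ) (h : ¬(k = 0 ∧ l = 0)) : 1 ≤ k^2 - k*l + l^2 := by
  have h4 : 0 < (2*k - l)^2 + 3*l^2 := by
    rcases eq_or_ne l 0 with rfl | hl
    · have hk : k ≠ 0 := by tauto
      have : 1 ≤ |k| := Int.one_le_abs hk
      nlinarith [sq_abs k]
    · have : 1 ≤ |l| := Int.one_le_abs hl
      nlinarith [sq_abs l, sq_nonneg (2*k - l)]
  nlinarith

lemma distkey (D : ℝ) (hD : 0 < D) (m n m' n' : ℤ) :
    dist ((m : ℝ) • (WithLp.equiv 2 (Fin 2 → ℝ)).symm ![1 / D, -(1 / (Real.sqrt 3 * D))] +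
          (n : ℝ) • (WithLp.equiv 2 (Fin 2 → ℝ)).symm ![0, 2 / (Real.sqrt 3 * D)])
         ((m' : ℝ) • (WithLp.equiv 2 (Fin 2 → ℝ)).symm ![1 / D, -(1 / (Real.sqrt 3 * D))] +
          (n' : ℝ) • (WithLp.equiv 2 (Fin 2 → ℝ)).symm ![0, 2 / (Real.sqrt 3 * D)])
    = Real.sqrt (4 / (3 * D^2) * (((m - m' : ℤ))^2 - (m - m' : ℤ)*(n - n' : ℤ) + ((n - n' : ℤ))^2)) := by
  have hs : Real.sqrt 3 ^ 2 = 3 := Real.sq_sqrt (by norm_num)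
  have hs0 : (0:ℝ) < Real.sqrt 3 := Real.sqrt_pos.mpr (by norm_num)
  have hD' : D ≠ 0 := hD.ne'
  have hs' : Real.sqrt 3 ≠ 0 := hs0.ne'
  rw [EuclideanSpace.dist_eq]
  congr 1
  rw [Fin.sum_univ_two]
  simp only [WithLp.equiv_symm_apply, WithLp.ofLp_toLp, PiLp.add_apply, PiLp.smul_apply,
    Matrix.cons_val_zero, Matrix.cons_val_one, Matrix.head_cons, smul_eq_mul,
    Real.dist_eq, sq_abs]
  push_cast
  have e1 : ∀ a : ℝ, (a / (Real.sqrt 3 * D)) ^ 2 = a ^ 2 / (3 * D ^ 2) := fun a => by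
    rw [div_pow, mul_pow, hs]
  rw [show (↑m * (1 / D) + ↑n * 0 - (↑m' * (1 / D) + ↑n' * 0)) ^ 2 +
      (↑m * -(1 / (Real.sqrt 3 * D)) + ↑n * (2 / (Real.sqrt 3 * D)) -
        (↑m' * -(1 / (Real.sqrt 3 * D)) + ↑n' * (2 / (Real.sqrt 3 * D)))) ^ 2
      = (((m:ℝ) - ↑m') / D) ^ 2 + ((2 * ((n:ℝ) - ↑n') - ((m:ℝ) - ↑m')) / (Real.sqrt 3 * D)) ^ 2 from by
    field_simp
    ring]
  rw [e1, div_pow]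
  field_simp
  ring

lemma sqrtkey (D : ℝ) (hD : 0 < D) :
    Real.sqrt (4 / (3 * D^2)) = 2 / (Real.sqrt 3 * D) := by
  have hs : Real.sqrt 3 ^ 2 = 3 := Real.sq_sqrt (by norm_num)
  have hs0 : (0:ℝ) < Real.sqrt 3 := Real.sqrt_pos.mpr (by norm_num)
  rw [show (4:ℝ) / (3 * D^2) = (2 / (Real.sqrt 3 * D))^2 by
    rw [div_pow, mul_pow, hs]; norm_num]
  exact Real.sqrt_sq (by positivity)

/-- The open Euclidean balls of radius `B` centered at the points of the reciprocal
lattice `L_t*` of the triangular sampling lattice with waveguide length `D` (the ℤ-span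
of `(1/D, −1/(√3·D))` and `(0, 2/(√3·D))`) are pairwise disjoint iff `D ≤ 1/(√3·B)`:
a circularly band-limited signal of radius `B` is sampled without aliasing by the
triangular waveguide mesh exactly when `D ≤ 1/(√3·B)`. -/
theorem stmt11 (D B : ℝ) (hD : 0 < D) (hB : 0 < B)
    (L : Set (EuclideanSpace ℝ (Fin 2)))
    (hL : L = {p | ∃ m n : ℤ,
      p = (m : ℝ) • (WithLp.equiv 2 (Fin 2 → ℝ)).symm ![1 / D, -(1 / (Real.sqrt 3 * D))] +
          (n : ℝ) • (WithLp.equiv 2 (Fin 2 → ℝ)).symm ![0, 2 / (Real.sqrt 3 * D)]}) :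
    L.Pairwise (fun p q => Disjoint (Metric.ball p B) (Metric.ball q B)) ↔
      D ≤ 1 / (Real.sqrt 3 * B) := by
  have hs : Real.sqrt 3 ^ 2 = 3 := Real.sq_sqrt (by norm_num)
  have hs0 : (0:ℝ) < Real.sqrt 3 := Real.sqrt_pos.mpr (by norm_num)
  subst hL
  constructor
  · intro h
    have hp : (((0:ℤ):ℝ) • (WithLp.equiv 2 (Fin 2 → ℝ)).symm ![1 / D, -(1 / (Real.sqrt 3 * D))] +
          ((0:ℤ):ℝ) • (WithLp.equiv 2 (Fin 2 → ℝ)).symm ![0, 2 / (Real.sqrt 3 * D)]) ∈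
        {p : EuclideanSpace ℝ (Fin 2) | ∃ m n : ℤ,
          p = (m : ℝ) • (WithLp.equiv 2 (Fin 2 → ℝ)).symm ![1 / D, -(1 / (Real.sqrt 3 * D))] +
          (n : ℝ) • (WithLp.equiv 2 (Fin 2 → ℝ)).symm ![0, 2 / (Real.sqrt 3 * D)]} := ⟨0, 0, rfl⟩
    have hq : (((1:ℤ):ℝ) • (WithLp.equiv 2 (Fin 2 → ℝ)).symm ![1 / D, -(1 / (Real.sqrt 3 * D))] +
          ((0:ℤ):ℝ) • (WithLp.equiv 2 (Fin 2 → ℝ)).symm ![0, 2 / (Real.sqrt 3 * D)]) ∈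
        {p : EuclideanSpace ℝ (Fin 2) | ∃ m n : ℤ,
          p = (m : ℝ) • (WithLp.equiv 2 (Fin 2 → ℝ)).symm ![1 / D, -(1 / (Real.sqrt 3 * D))] +
          (n : ℝ) • (WithLp.equiv 2 (Fin 2 → ℝ)).symm ![0, 2 / (Real.sqrt 3 * D)]} := ⟨1, 0, rfl⟩
    have hd : dist
        (((0:ℤ):ℝ) • (WithLp.equiv 2 (Fin 2 → ℝ)).symm ![1 / D, -(1 / (Real.sqrt 3 * D))] +
          ((0:ℤ):ℝ) • (WithLp.equiv 2 (Fin 2 → ℝ)).symm ![0, 2 / (Real.sqrt 3 * D)])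
        (((1:ℤ):ℝ) • (WithLp.equiv 2 (Fin 2 → ℝ)).symm ![1 / D, -(1 / (Real.sqrt 3 * D))] +
          ((0:ℤ):ℝ) • (WithLp.equiv 2 (Fin 2 → ℝ)).symm ![0, 2 / (Real.sqrt 3 * D)])
        = Real.sqrt (4 / (3 * D^2)) := by
      rw [distkey D hD 0 0 1 0]
      norm_num
    have hne : (((0:ℤ):ℝ) • (WithLp.equiv 2 (Fin 2 → ℝ)).symm ![1 / D, -(1 / (Real.sqrt 3 * D))] +
          ((0:ℤ):ℝ) • (WithLp.equiv 2 (Fin 2 → ℝ)).symm ![0, 2 / (Real.sqrt 3 * D)]) ≠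
        (((1:ℤ):ℝ) • (WithLp.equiv 2 (Fin 2 → ℝ)).symm ![1 / D, -(1 / (Real.sqrt 3 * D))] +
          ((0:ℤ):ℝ) • (WithLp.equiv 2 (Fin 2 → ℝ)).symm ![0, 2 / (Real.sqrt 3 * D)]) := by
      intro he
      rw [he, dist_self] at hd
      exact absurd hd.symm (Real.sqrt_pos.mpr (by positivity)).ne'
    have hdisj : Disjoint
        (Metric.ball (((0:ℤ):ℝ) • (WithLp.equiv 2 (Fin 2 → ℝ)).symm ![1 / D, -(1 / (Real.sqrt 3 * D))] +
          ((0:ℤ):ℝ) • (WithLp.equiv 2 (Fin 2 → ℝ)).symm ![0, 2 / (Real.sqrt 3 * D)]) B)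
        (Metric.ball (((1:ℤ):ℝ) • (WithLp.equiv 2 (Fin 2 → ℝ)).symm ![1 / D, -(1 / (Real.sqrt 3 * D))] +
          ((0:ℤ):ℝ) • (WithLp.equiv 2 (Fin 2 → ℝ)).symm ![0, 2 / (Real.sqrt 3 * D)]) B) :=
      h hp hq hne
    rw [disjoint_ball_ball_iff hB hB, hd, sqrtkey D hD] at hdisj
    rw [le_div_iff₀ (by positivity)]
    have h2 := (le_div_iff₀ (by positivity : (0:ℝ) < Real.sqrt 3 * D)).mp
      (by linarith : 2 * B ≤ 2 / (Real.sqrt 3 * D))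
    nlinarith
  · intro hDB p hp q hq hne
    obtain ⟨m, n, rfl⟩ := hp
    obtain ⟨m', n', rfl⟩ := hq
    show Disjoint (Metric.ball _ B) (Metric.ball _ B)
    rw [disjoint_ball_ball_iff hB hB, distkey D hD]
    have hk : ¬((m - m') = 0 ∧ (n - n') = 0) := by
      rintro ⟨h1, h2⟩
      apply hne
      have hm : m = m' := by omega
      have hn : n = n' := by omega
      rw [hm, hn]
    have h1' : (1:ℝ) ≤ ((m - m' : ℤ):ℝ)^2 - ((m - m':ℤ):ℝ)*((n - n':ℤ):ℝ) + ((n - n':ℤ):ℝ)^2 := by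
      exact_mod_cast intkey _ _ hk
    have hBD : 2 * B ≤ 2 / (Real.sqrt 3 * D) := by
      rw [le_div_iff₀ (by positivity)]
      have := (le_div_iff₀ (by positivity : (0:ℝ) < Real.sqrt 3 * B)).mp hDB
      nlinarith
    have hmin : 4 / (3 * D^2) ≤
        4 / (3 * D^2) * (((m - m' : ℤ):ℝ)^2 - ((m - m':ℤ):ℝ)*((n - n':ℤ):ℝ) + ((n - n':ℤ):ℝ)^2) := by
      have h0 : (0:ℝ) < 4 / (3 * D^2) := by positivity
      nlinarith
    calc B + B = 2 * B := by ring
      _ ≤ Real.sqrt (4 / (3 * D^2)) := by rw [sqrtkey D hD]; exact hBD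
      _ ≤ _ := Real.sqrt_le_sqrt hmin
end

section
/- Let D > 0 and let R be the rotation of ℝ² by the angle π/6. Then R maps the ℤ-span of the vectors (√3·D, 0) and ((√3/2)·D, (3/2)·D) (the triangular lattice L_t(√3·D)) bijectively onto the ℤ-span of the vectors ((3/2)·D, (√3/2)·D) and (0, √3·D) (the lattice L_T(D)). Hence L_T(D) = L_t(√3·D) up to a rotation, so a hexagonal waveguide mesh with waveguide length D does not perform better (in aliasing-free bandwidth) than a triangular waveguide mesh whose waveguides are √3 times longer. -/
open Real

/-- The rotation `R` of the plane by `π/6` maps the triangular lattice `L_t(√3·D)`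
(ℤ-span of `(√3·D, 0)` and `((√3/2)·D, (3/2)·D)`) bijectively onto the lattice `L_T(D)`
(ℤ-span of `((3/2)·D, (√3/2)·D)` and `(0, √3·D)`): `L_T(D) = L_t(√3·D)` up to a
rotation, so the hexagonal mesh with waveguide length `D` does not perform better than
a triangular mesh whose waveguides are `√3` times longer. -/
theorem stmt15 (D : ℝ) (hD : 0 < D)
    (R : ℝ × ℝ → ℝ × ℝ)
    (hR : ∀ p : ℝ × ℝ, R p = (Real.cos (π / 6) * p.1 - Real.sin (π / 6) * p.2,
                              Real.sin (π / 6) * p.1 + Real.cos (π / 6) * p.2))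
    (L1 L2 : Set (ℝ × ℝ))
    (hL1 : L1 = {p | ∃ m n : ℤ, p = (m : ℝ) • ((Real.sqrt 3 * D, 0) : ℝ × ℝ) +
      (n : ℝ) • ((Real.sqrt 3 / 2 * D, 3 / 2 * D) : ℝ × ℝ)})
    (hL2 : L2 = {p | ∃ m n : ℤ, p = (m : ℝ) • ((3 / 2 * D, Real.sqrt 3 / 2 * D) : ℝ × ℝ) +
      (n : ℝ) • ((0, Real.sqrt 3 * D) : ℝ × ℝ)}) :
    Set.BijOn R L1 L2 := by
  have hc : Real.cos (π / 6) = Real.sqrt 3 / 2 := Real.cos_pi_div_six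
  have hs : Real.sin (π / 6) = 1 / 2 := Real.sin_pi_div_six
  have h3 : Real.sqrt 3 * Real.sqrt 3 = 3 := Real.mul_self_sqrt (by norm_num)
  have key : ∀ m n : ℤ, R ((m : ℝ) • ((Real.sqrt 3 * D, 0) : ℝ × ℝ) +
      (n : ℝ) • ((Real.sqrt 3 / 2 * D, 3 / 2 * D) : ℝ × ℝ)) =
      (m : ℝ) • ((3 / 2 * D, Real.sqrt 3 / 2 * D) : ℝ × ℝ) +
      (n : ℝ) • ((0, Real.sqrt 3 * D) : ℝ × ℝ) := by
    intro m n
    rw [hR, hc, hs]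
    simp only [Prod.smul_mk, Prod.mk_add_mk, smul_eq_mul, Prod.mk.injEq, Prod.fst, Prod.snd]
    constructor
    · linear_combination ((m : ℝ) / 2 + (n : ℝ) / 4) * D * h3
    · ring
  have hinj : Function.Injective R := by
    intro p q h
    rw [hR p, hR q, hc, hs, Prod.mk.injEq] at h
    obtain ⟨h1, h2⟩ := h
    have e1 : p.1 = q.1 := by
      linear_combination (Real.sqrt 3 / 2) * h1 + (1 / 2) * h2 + (q.1 / 4 - p.1 / 4) * h3
    have e2 : p.2 = q.2 := by
      linear_combination (-(1 / 2)) * h1 + (Real.sqrt 3 / 2) * h2 + (q.2 / 4 - p.2 / 4) * h3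
    exact Prod.ext e1 e2
  subst hL1 hL2
  refine ⟨?_, hinj.injOn, ?_⟩
  · rintro p ⟨m, n, rfl⟩
    exact ⟨m, n, key m n⟩
  · rintro p ⟨m, n, rfl⟩
    exact ⟨(m : ℝ) • ((Real.sqrt 3 * D, 0) : ℝ × ℝ) +
      (n : ℝ) • ((Real.sqrt 3 / 2 * D, 3 / 2 * D) : ℝ × ℝ), ⟨m, n, rfl⟩, key m n⟩
end

section
/- For all real numbers a, b with 0 ≤ a ≤ π/2 and 0 ≤ b ≤ π/2, one has arccos((cos a + cos b)/2) ≤ √((a² + b²)/2). Equivalently, for the square waveguide mesh with waveguide length D > 0, the dispersion ratio k_s(ξ_x, ξ_y) = (1/(2πD·√(ξ_x²+ξ_y²)))·arccos(b_s(ξ_x,ξ_y)/2), with b_s(ξ_x,ξ_y) = cos(2πDξ_x) + cos(2πDξ_y), satisfies k_s(ξ_x, ξ_y) ≤ 1/√2 for all 0 ≤ ξ_x, ξ_y ≤ 1/(4D) with (ξ_x, ξ_y) ≠ (0, 0): the propagation speed on the mesh is maximal at dc and decreases for increasing spatial frequencies. -/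
open Real Set

private lemma W_deriv (u v : ℝ) (huv : u^2 + v^2 = 1) (r : ℝ) :
    HasDerivAt (fun r : ℝ =>
        (-(u * Real.sin (r*u) * Real.cos (r*v)) - v * Real.cos (r*u) * Real.sin (r*v)) * Real.cos r
          + Real.cos (r*u) * Real.cos (r*v) * Real.sin r)
      (2*u*v*Real.sin (r*u)*Real.sin (r*v)*Real.cos r) r := by
  have hu : HasDerivAt (fun r : ℝ => r * u) u r := by
    simpa using (hasDerivAt_id r).mul_const u
  have hv : HasDerivAt (fun r : ℝ => r * v) v r := by
    simpa using (hasDerivAt_id r).mul_const v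
  have h := ((((hu.sin.mul hv.cos).const_mul u).neg.sub
      ((hu.cos.mul hv.sin).const_mul v)).mul (Real.hasDerivAt_cos r)).add
      (((hu.cos.mul hv.cos)).mul (Real.hasDerivAt_sin r))
  convert h using 1
  · rfl
  · rfl
  · ext x; simp only [Pi.mul_apply, Pi.neg_apply, Pi.sub_apply, Pi.add_apply]; ring
  simp only [Pi.mul_apply, Pi.neg_apply, Pi.sub_apply, Pi.add_apply]
  linear_combination (Real.cos (r * u) * Real.cos (r * v) * Real.cos r) * huv

private lemma psi_deriv (u v : ℝ) (r : ℝ) :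
    HasDerivAt (fun r : ℝ => Real.cos (r*u) * Real.cos (r*v))
      (-(u * Real.sin (r*u) * Real.cos (r*v)) - v * Real.cos (r*u) * Real.sin (r*v)) r := by
  have hu : HasDerivAt (fun r : ℝ => r * u) u r := by
    simpa using (hasDerivAt_id r).mul_const u
  have hv : HasDerivAt (fun r : ℝ => r * v) v r := by
    simpa using (hasDerivAt_id r).mul_const v
  have h := (hu.cos.mul hv.cos)
  convert h using 1
  · rfl
  · rfl
  · rfl
  ring

private lemma key_ineq (u v R : ℝ) (hu : 0 ≤ u) (hv : 0 ≤ v) (huv : u^2 + v^2 = 1)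
    (hR0 : 0 ≤ R) (hR : R ≤ π/2) :
    Real.cos R ≤ Real.cos (R*u) * Real.cos (R*v) := by
  have hu1 : u ≤ 1 := by nlinarith
  have hv1 : v ≤ 1 := by nlinarith
  have hRu0 : 0 ≤ R*u := mul_nonneg hR0 hu
  have hRv0 : 0 ≤ R*v := mul_nonneg hR0 hv
  have hRuR : R*u ≤ R := by nlinarith
  have hRvR : R*v ≤ R := by nlinarith
  rcases eq_or_lt_of_le hR with hR2 | hR2
  · subst hR2
    rw [Real.cos_pi_div_two]
    have hpi := Real.pi_pos
    exact mul_nonneg (Real.cos_nonneg_of_mem_Icc ⟨by nlinarith, by nlinarith⟩)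
      (Real.cos_nonneg_of_mem_Icc ⟨by nlinarith, by nlinarith⟩)
  -- Sturm comparison argument
  set W : ℝ → ℝ := fun r =>
    (-(u * Real.sin (r*u) * Real.cos (r*v)) - v * Real.cos (r*u) * Real.sin (r*v)) * Real.cos r
      + Real.cos (r*u) * Real.cos (r*v) * Real.sin r with hWdef
  have hWd : ∀ r, HasDerivAt W (2*u*v*Real.sin (r*u)*Real.sin (r*v)*Real.cos r) r :=
    fun r => W_deriv u v huv r
  have hW0 : W 0 = 0 := by simp [hWdef]
  have hWmono : MonotoneOn W (Icc 0 R) := by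
    apply monotoneOn_of_deriv_nonneg (convex_Icc 0 R)
      (fun r _ => (hWd r).continuousAt.continuousWithinAt)
      (fun r _ => (hWd r).differentiableAt.differentiableWithinAt)
    intro x hx
    rw [interior_Icc] at hx
    rw [(hWd x).deriv]
    have hx0 : 0 ≤ x := le_of_lt hx.1
    have hxR : x ≤ R := le_of_lt hx.2
    have h1 : 0 ≤ Real.sin (x*u) := Real.sin_nonneg_of_nonneg_of_le_pi (mul_nonneg hx0 hu)
      (by nlinarith [Real.pi_pos])
    have h2 : 0 ≤ Real.sin (x*v) := Real.sin_nonneg_of_nonneg_of_le_pi (mul_nonneg hx0 hv)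
      (by nlinarith [Real.pi_pos])
    have h3 : 0 ≤ Real.cos x := Real.cos_nonneg_of_mem_Icc ⟨by linarith, by linarith⟩
    positivity
  have hWnn : ∀ r ∈ Icc (0:ℝ) R, 0 ≤ W r := by
    intro r hr
    have := hWmono (left_mem_Icc.2 hR0) hr hr.1
    linarith [hW0]
  -- the quotient ψ/φ
  have hcospos : ∀ r ∈ Icc (0:ℝ) R, 0 < Real.cos r := by
    intro r hr
    exact Real.cos_pos_of_mem_Ioo ⟨by linarith [hr.1, Real.pi_pos], lt_of_le_of_lt hr.2 hR2⟩
  set Q : ℝ → ℝ := fun r => (Real.cos (r*u) * Real.cos (r*v)) / Real.cos r with hQdef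
  have hQd : ∀ r ∈ Icc (0:ℝ) R, HasDerivAt Q (W r / (Real.cos r)^2) r := by
    intro r hr
    have h := (psi_deriv u v r).div (Real.hasDerivAt_cos r) (ne_of_gt (hcospos r hr))
    convert h using 1
    · rfl
    · rfl
    · rfl
    rw [hWdef]
    ring
  have hQmono : MonotoneOn Q (Icc 0 R) := by
    apply monotoneOn_of_deriv_nonneg (convex_Icc 0 R)
      (fun r hr => (hQd r hr).continuousAt.continuousWithinAt)
      (fun r hr => (hQd r (interior_subset hr)).differentiableAt.differentiableWithinAt)
    intro x hx
    rw [(hQd x (interior_subset hx)).deriv]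
    exact div_nonneg (hWnn x (interior_subset hx)) (sq_nonneg _)
  have hQ0 : Q 0 = 1 := by simp [hQdef]
  have := hQmono (left_mem_Icc.2 hR0) (right_mem_Icc.2 hR0) hR0
  rw [hQ0] at this
  have hcR := hcospos R (right_mem_Icc.2 hR0)
  rw [hQdef] at this
  simp only [ge_iff_le, le_div_iff₀ hcR, one_mul] at this
  linarith

private lemma part1 (a b : ℝ) (ha0 : 0 ≤ a) (ha : a ≤ π / 2) (hb0 : 0 ≤ b) (hb : b ≤ π / 2) :
    Real.arccos ((Real.cos a + Real.cos b) / 2) ≤ Real.sqrt ((a ^ 2 + b ^ 2) / 2) := by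
  wlog hab : b ≤ a generalizing a b
  · have := this b a hb0 hb ha0 ha (by linarith)
    convert this using 3 <;> ring
  set r := Real.sqrt ((a ^ 2 + b ^ 2) / 2) with hrdef
  have hr0 : 0 ≤ r := Real.sqrt_nonneg _
  have hr2 : r ^ 2 = (a ^ 2 + b ^ 2) / 2 := Real.sq_sqrt (by positivity)
  have hrpi : r ≤ π / 2 := by
    rw [hrdef]
    have : (a ^ 2 + b ^ 2) / 2 ≤ (π/2)^2 := by nlinarith
    calc Real.sqrt ((a ^ 2 + b ^ 2) / 2) ≤ Real.sqrt ((π/2)^2) := Real.sqrt_le_sqrt this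
      _ = π/2 := Real.sqrt_sq (by positivity)
  rcases eq_or_lt_of_le hr0 with hr | hr
  · have ha' : a = 0 := by nlinarith
    have hb' : b = 0 := by nlinarith
    simp [ha', hb', ← hr]
  -- main case
  have hu : (0:ℝ) ≤ (a+b)/2/r := by positivity
  have hv : (0:ℝ) ≤ (a-b)/2/r := by
    apply div_nonneg _ hr0; linarith
  have huv : ((a+b)/2/r)^2 + ((a-b)/2/r)^2 = 1 := by
    field_simp
    linarith [hr2]
  have hkey := key_ineq ((a+b)/2/r) ((a-b)/2/r) r hu hv huv hr0 hrpi
  rw [show r * ((a+b)/2/r) = (a+b)/2 by field_simp,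
      show r * ((a-b)/2/r) = (a-b)/2 by field_simp] at hkey
  have hsum : (Real.cos a + Real.cos b) / 2 = Real.cos ((a+b)/2) * Real.cos ((a-b)/2) := by
    rw [Real.cos_add_cos]; ring
  have hge : Real.cos r ≤ (Real.cos a + Real.cos b) / 2 := by rw [hsum]; exact hkey
  calc Real.arccos ((Real.cos a + Real.cos b) / 2)
      ≤ Real.arccos (Real.cos r) := by
        unfold Real.arccos
        have := Real.monotone_arcsin hge
        linarith
    _ = r := Real.arccos_cos hr0 (by linarith [Real.pi_pos])

/-- For `a, b ∈ [0, π/2]` one has `arccos((cos a + cos b)/2) ≤ √((a² + b²)/2)`;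
equivalently, the dispersion ratio of the square waveguide mesh,
`k_s(ξ_x, ξ_y) = arccos(b_s/2)/(2πD·√(ξ_x²+ξ_y²))` with
`b_s = cos(2πDξ_x) + cos(2πDξ_y)`, satisfies `k_s ≤ 1/√2` for all
`0 ≤ ξ_x, ξ_y ≤ 1/(4D)` with `(ξ_x, ξ_y) ≠ (0, 0)`: the propagation speed is maximal
at dc. -/
theorem stmt17 :
    (∀ a b : ℝ, 0 ≤ a → a ≤ π / 2 → 0 ≤ b → b ≤ π / 2 →
      Real.arccos ((Real.cos a + Real.cos b) / 2) ≤ Real.sqrt ((a ^ 2 + b ^ 2) / 2)) ∧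
    (∀ D ξx ξy : ℝ, 0 < D → 0 ≤ ξx → ξx ≤ 1 / (4 * D) → 0 ≤ ξy → ξy ≤ 1 / (4 * D) →
      (ξx, ξy) ≠ (0, 0) →
      (1 / (2 * π * D * Real.sqrt (ξx ^ 2 + ξy ^ 2))) *
        Real.arccos ((Real.cos (2 * π * D * ξx) + Real.cos (2 * π * D * ξy)) / 2) ≤
        1 / Real.sqrt 2) := by
  constructor
  · exact part1
  intro D ξx ξy hD hx0 hx1 hy0 hy1 hne
  have hpi := Real.pi_pos
  have hS2 : 0 < ξx ^ 2 + ξy ^ 2 := by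
    rcases (show ξx ≠ 0 ∨ ξy ≠ 0 by
      by_contra h
      push_neg at h
      exact hne (by simp [h.1, h.2])) with h | h
    · have : 0 < ξx ^ 2 := by positivity
      nlinarith [sq_nonneg ξy]
    · have : 0 < ξy ^ 2 := by positivity
      nlinarith [sq_nonneg ξx]
  set S := Real.sqrt (ξx ^ 2 + ξy ^ 2) with hSdef
  have hS : 0 < S := Real.sqrt_pos.2 hS2
  have hSsq : S ^ 2 = ξx ^ 2 + ξy ^ 2 := Real.sq_sqrt (le_of_lt hS2)
  set a := 2 * π * D * ξx with hadef
  set b := 2 * π * D * ξy with hbdef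
  have ha0 : 0 ≤ a := by positivity
  have hb0 : 0 ≤ b := by positivity
  have ha : a ≤ π / 2 := by
    rw [hadef]
    calc 2 * π * D * ξx ≤ 2 * π * D * (1 / (4 * D)) := by
          apply mul_le_mul_of_nonneg_left hx1 (by positivity)
      _ = π / 2 := by field_simp; ring
  have hb : b ≤ π / 2 := by
    rw [hbdef]
    calc 2 * π * D * ξy ≤ 2 * π * D * (1 / (4 * D)) := by
          apply mul_le_mul_of_nonneg_left hy1 (by positivity)
      _ = π / 2 := by field_simp; ring
  have h1 := part1 a b ha0 ha hb0 hb
  have h2 : Real.sqrt ((a ^ 2 + b ^ 2) / 2) = 2 * π * D * S / Real.sqrt 2 := by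
    rw [show (a ^ 2 + b ^ 2) / 2 = (2 * π * D * S / Real.sqrt 2)^2 by
      rw [div_pow, Real.sq_sqrt (by norm_num : (0:ℝ) ≤ 2)]
      rw [hadef, hbdef]
      field_simp
      nlinarith [hSsq]]
    exact Real.sqrt_sq (by positivity)
  rw [h2] at h1
  have hpos : (0:ℝ) < 2 * π * D * S := by positivity
  calc (1 / (2 * π * D * S)) *
        Real.arccos ((Real.cos a + Real.cos b) / 2)
      ≤ (1 / (2 * π * D * S)) * (2 * π * D * S / Real.sqrt 2) := by
        apply mul_le_mul_of_nonneg_left h1 (by positivity)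
    _ = 1 / Real.sqrt 2 := by field_simp
end

section
/- Let B > 0, let D = 1/(2B) be the reference (critical square) waveguide length, and let D_t = 1/(√3·B) be the critical waveguide length of the triangular mesh. Let (u, v) ∈ ℝ² with u² + v² = 1, and define b̃_t(ξ_x, ξ_y) = (2/3)·[cos(2πD_t·ξ_x) + cos(2πD_t·(ξ_x/2 + (√3/2)·ξ_y)) + cos(2πD_t·(ξ_x/2 − (√3/2)·ξ_y))]. Then the function t ↦ (1/(2πD·t))·arctan(√(4 − b̃_t(t·u, t·v)²)/b̃_t(t·u, t·v)) tends to √2/√3 as t → 0⁺; that is, under critical sampling the dc dispersion ratio of the triangular waveguide mesh is k̃_t(0) = √2/√3. -/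
open Real Filter Topology

lemma aux_one_sub_cos (x : ℝ) : 1 - Real.cos x = 2 * Real.sin (x/2) ^ 2 := by
  have h := Real.cos_two_mul (x/2)
  have h2 := Real.sin_sq_add_cos_sq (x/2)
  have : (2:ℝ) * (x/2) = x := by ring
  rw [this] at h
  nlinarith

lemma aux_arctan : Tendsto (fun x : ℝ => Real.arctan x / x) (𝓝[≠] (0:ℝ)) (𝓝 1) := by
  have h := hasDerivAt_iff_tendsto_slope.1 (Real.hasDerivAt_arctan 0)
  simp only [slope_fun_def, Real.arctan_zero, sub_zero, vsub_eq_sub, smul_eq_mul] at h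
  norm_num at h
  refine h.congr fun x => ?_
  rw [div_eq_inv_mul]

lemma aux_sin : Tendsto (fun x : ℝ => Real.sin x / x) (𝓝[≠] (0:ℝ)) (𝓝 1) := by
  have h := hasDerivAt_iff_tendsto_slope.1 (Real.hasDerivAt_sin 0)
  simp only [slope_fun_def, Real.sin_zero, Real.cos_zero, sub_zero, vsub_eq_sub, smul_eq_mul] at h
  refine h.congr fun x => ?_
  rw [div_eq_inv_mul]

lemma aux_cos_lim (c : ℝ) :
    Tendsto (fun t : ℝ => (1 - Real.cos (c * t)) / t ^ 2) (𝓝[>] (0:ℝ)) (𝓝 (c ^ 2 / 2)) := by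
  rcases eq_or_ne c 0 with rfl | hc
  · simp only [zero_mul, Real.cos_zero, sub_self, zero_div]
    simpa using tendsto_const_nhds (x := (0:ℝ)) (f := 𝓝[>] (0:ℝ))
  · have hm : Tendsto (fun t : ℝ => c * t / 2) (𝓝[>] (0:ℝ)) (𝓝[≠] (0:ℝ)) := by
      rw [tendsto_nhdsWithin_iff]
      constructor
      · have : Tendsto (fun t : ℝ => c * t / 2) (𝓝 (0:ℝ)) (𝓝 (c * 0 / 2)) :=
          ((continuous_const.mul continuous_id).div_const 2).tendsto 0
        simpa using this.mono_left nhdsWithin_le_nhds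
      · filter_upwards [self_mem_nhdsWithin] with t ht
        have ht' : t ≠ 0 := ne_of_gt ht
        simp only [Set.mem_compl_iff, Set.mem_singleton_iff]
        positivity
    have h1 : Tendsto (fun t : ℝ => Real.sin (c * t / 2) / (c * t / 2))
        (𝓝[>] (0:ℝ)) (𝓝 1) := aux_sin.comp hm
    have h2 : Tendsto (fun t : ℝ => c ^ 2 / 2 *
        (Real.sin (c * t / 2) / (c * t / 2)) ^ 2) (𝓝[>] (0:ℝ)) (𝓝 (c ^ 2 / 2)) := by
      have := (h1.pow 2).const_mul (c ^ 2 / 2)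
      simpa using this
    refine h2.congr' ?_
    filter_upwards [self_mem_nhdsWithin] with t ht
    have ht' : t ≠ 0 := ne_of_gt ht
    rw [aux_one_sub_cos (c * t)]
    field_simp

/-- Under critical sampling of a signal with circular spatial band of radius `B`
(reference square length `D = 1/(2B)`, triangular critical length `D_t = 1/(√3·B)`),
the dc dispersion ratio of the triangular waveguide mesh is `k̃_t(0) = √2/√3`: along any
unit direction `(u, v)`, the corrected dispersion ratio tends to `√2/√3` as the spatial
frequency tends to `0⁺`. -/
theorem stmt18 (B u v : ℝ) (hB : 0 < B) (huv : u ^ 2 + v ^ 2 = 1)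
    (D Dt : ℝ) (hD : D = 1 / (2 * B)) (hDt : Dt = 1 / (Real.sqrt 3 * B))
    (b : ℝ → ℝ → ℝ)
    (hb : ∀ ξx ξy, b ξx ξy = (2 / 3) * (Real.cos (2 * π * Dt * ξx) +
      Real.cos (2 * π * Dt * (ξx / 2 + Real.sqrt 3 / 2 * ξy)) +
      Real.cos (2 * π * Dt * (ξx / 2 - Real.sqrt 3 / 2 * ξy)))) :
    Filter.Tendsto (fun t : ℝ => (1 / (2 * π * D * t)) *
        Real.arctan (Real.sqrt (4 - (b (t * u) (t * v)) ^ 2) / b (t * u) (t * v)))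
      (nhdsWithin 0 (Set.Ioi 0)) (nhds (Real.sqrt 2 / Real.sqrt 3)) := by
  have hπ : (0:ℝ) < π := Real.pi_pos
  have hs3 : (0:ℝ) < Real.sqrt 3 := Real.sqrt_pos.2 (by norm_num)
  have h33 : Real.sqrt 3 * Real.sqrt 3 = 3 := Real.mul_self_sqrt (by norm_num)
  have hDtpos : 0 < Dt := by rw [hDt]; positivity
  have hDpos : 0 < D := by rw [hD]; positivity
  set c : ℝ := 2 * π * Dt with hc
  have hcpos : 0 < c := by positivity
  set F : ℝ → ℝ := fun t => b (t * u) (t * v) with hFdef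
  set w₂ : ℝ := u / 2 + Real.sqrt 3 / 2 * v with hw2
  set w₃ : ℝ := u / 2 - Real.sqrt 3 / 2 * v with hw3
  have hF' : ∀ t, F t = (2/3) * (Real.cos (c * u * t) +
      Real.cos (c * w₂ * t) + Real.cos (c * w₃ * t)) := by
    intro t
    rw [hFdef]
    simp only
    rw [hb]
    rw [hw2, hw3]
    ring_nf
  -- limit of F
  have hF2 : Filter.Tendsto F (𝓝[>] (0:ℝ)) (𝓝 2) := by
    have hco : Continuous fun t : ℝ => (2/3 : ℝ) * (Real.cos (c * u * t) +
        Real.cos (c * w₂ * t) + Real.cos (c * w₃ * t)) := by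
      fun_prop
    have h0 := hco.tendsto 0
    simp only [mul_zero, Real.cos_zero] at h0
    norm_num at h0
    exact ((h0.congr (fun t => (hF' t).symm)).mono_left nhdsWithin_le_nhds)
  -- limit of (2 - F t)/t^2
  have hsum : Filter.Tendsto (fun t : ℝ => (2 - F t) / t ^ 2) (𝓝[>] (0:ℝ))
      (𝓝 (c ^ 2 / 2)) := by
    have hA := aux_cos_lim (c * u)
    have hB2 := aux_cos_lim (c * w₂)
    have hC := aux_cos_lim (c * w₃)
    have hT := (((hA.add hB2).add hC).const_mul (2/3 : ℝ))
    have hval : (2/3 : ℝ) * ((c*u)^2/2 + (c*w₂)^2/2 + (c*w₃)^2/2) = c^2/2 := by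
      rw [hw2, hw3]
      have h3 : Real.sqrt 3 ^ 2 = 3 := Real.sq_sqrt (by norm_num)
      linear_combination (c^2*v^2/6) * h3 + (c^2/2) * huv
    rw [hval] at hT
    refine hT.congr' ?_
    filter_upwards [self_mem_nhdsWithin] with t ht
    have ht' : t ≠ 0 := ne_of_gt ht
    rw [hF' t]
    field_simp
    ring
  -- limit of G t = (4 - F t ^2)/t^2
  have hg : Filter.Tendsto (fun t : ℝ => (4 - F t ^ 2) / t ^ 2) (𝓝[>] (0:ℝ))
      (𝓝 (2 * c ^ 2)) := by
    have hT := hsum.mul ((tendsto_const_nhds (x := (2:ℝ))).add hF2)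
    have : (c^2/2) * (2 + 2) = 2 * c^2 := by ring
    rw [this] at hT
    refine hT.congr' ?_
    filter_upwards [self_mem_nhdsWithin] with t ht
    have ht' : t ≠ 0 := ne_of_gt ht
    field_simp
    ring
  set G : ℝ → ℝ := fun t => (4 - F t ^ 2) / t ^ 2 with hGdef
  -- eventual positivity
  have htpos : ∀ᶠ t in 𝓝[>] (0:ℝ), 0 < t := self_mem_nhdsWithin
  have hFpos : ∀ᶠ t in 𝓝[>] (0:ℝ), 1 < F t :=
    hF2.eventually (eventually_gt_nhds (by norm_num))
  have hGpos : ∀ᶠ t in 𝓝[>] (0:ℝ), 0 < G t :=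
    hg.eventually (eventually_gt_nhds (by positivity))
  -- X t
  set X : ℝ → ℝ := fun t => t * Real.sqrt (G t) / F t with hXdef
  have htt : Filter.Tendsto (fun t : ℝ => t) (𝓝[>] (0:ℝ)) (𝓝 0) :=
    Filter.tendsto_id.mono_left nhdsWithin_le_nhds
  have hX0 : Filter.Tendsto X (𝓝[>] (0:ℝ)) (𝓝 0) := by
    have := (htt.mul hg.sqrt).div hF2 (by norm_num)
    rw [zero_mul, zero_div] at this
    exact this
  have hXne : Filter.Tendsto X (𝓝[>] (0:ℝ)) (𝓝[≠] (0:ℝ)) := by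
    rw [tendsto_nhdsWithin_iff]
    refine ⟨hX0, ?_⟩
    filter_upwards [htpos, hFpos, hGpos] with t ht h1 h2
    have hs : 0 < Real.sqrt (G t) := Real.sqrt_pos.2 h2
    have : 0 < X t := by rw [hXdef]; positivity
    simp only [Set.mem_compl_iff, Set.mem_singleton_iff]
    exact ne_of_gt this
  have harc : Filter.Tendsto (fun t => Real.arctan (X t) / X t) (𝓝[>] (0:ℝ)) (𝓝 1) :=
    aux_arctan.comp hXne
  -- second factor
  have h2πD : Filter.Tendsto (fun t : ℝ => 2 * π * D * F t) (𝓝[>] (0:ℝ))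
      (𝓝 (2 * π * D * 2)) := tendsto_const_nhds.mul hF2
  have hden : (2 : ℝ) * π * D * 2 ≠ 0 := by positivity
  have hfac : Filter.Tendsto (fun t : ℝ => Real.sqrt (G t) / (2 * π * D * F t))
      (𝓝[>] (0:ℝ)) (𝓝 (Real.sqrt (2 * c ^ 2) / (2 * π * D * 2))) :=
    hg.sqrt.div h2πD hden
  have hprod := harc.mul hfac
  rw [one_mul] at hprod
  -- identify the limit value
  have hval2 : Real.sqrt (2 * c ^ 2) / (2 * π * D * 2) = Real.sqrt 2 / Real.sqrt 3 := by
    have hsq : Real.sqrt (2 * c ^ 2) = Real.sqrt 2 * c := by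
      rw [Real.sqrt_mul (by norm_num), Real.sqrt_sq hcpos.le]
    rw [hsq, hc, hD, hDt]
    have hB' : B ≠ 0 := ne_of_gt hB
    have hπ' : π ≠ 0 := ne_of_gt hπ
    have hs3' : Real.sqrt 3 ≠ 0 := ne_of_gt hs3
    field_simp
  rw [hval2] at hprod
  -- conclude by eventual equality
  refine hprod.congr' ?_
  filter_upwards [htpos, hFpos, hGpos] with t ht h1 h2
  have ht' : t ≠ 0 := ne_of_gt ht
  have hFt : (0:ℝ) < F t := lt_trans one_pos h1
  have hsG : 0 < Real.sqrt (G t) := Real.sqrt_pos.2 h2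
  have h4 : 4 - F t ^ 2 = t ^ 2 * G t := by
    rw [hGdef]; field_simp
  have h5 : Real.sqrt (4 - F t ^ 2) = t * Real.sqrt (G t) := by
    rw [h4, Real.sqrt_mul (sq_nonneg t), Real.sqrt_sq ht.le]
  have hbF : b (t * u) (t * v) = F t := by rw [hFdef]
  rw [hbF, h5]
  have hXt : X t = t * Real.sqrt (G t) / F t := by rw [hXdef]
  rw [← hXt]
  have hXpos : 0 < X t := by rw [hXdef]; positivity
  rw [hXt]
  field_simp
end

section
/- Let B > 0, let D = 1/(2B) be the reference (critical square) waveguide length, and let D_h = 1/(3B) be the critical waveguide length of the hexagonal mesh. Let (u, v) ∈ ℝ² with u² + v² = 1, and define b̃_h(ξ_x, ξ_y) = (8/9)·[cos(2π√3·D_h·ξ_x) + cos(2πD_h·((√3/2)·ξ_x + (3/2)·ξ_y)) + cos(2πD_h·((√3/2)·ξ_x − (3/2)·ξ_y))] − 2/3. Then the function t ↦ (1/(4πD·t))·arctan(√(4 − b̃_h(t·u, t·v)²)/b̃_h(t·u, t·v)) tends to √2/3 as t → 0⁺; that is, under critical sampling the dc dispersion ratio of the hexagonal waveguide mesh is k̃_h(0)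 = √2/3. -/
open Real Filter

private theorem keylim19 (c : ℝ) : Filter.Tendsto (fun t : ℝ => (1 - Real.cos (c*t))/t^2) (nhdsWithin 0 {(0:ℝ)}ᶜ) (nhds (c^2/2)) := by
  have hd : HasDerivAt (fun t : ℝ => Real.sin (c/2 * t)) (c/2) 0 := by
    have := (Real.hasDerivAt_sin (c/2 * 0)).comp 0 ((hasDerivAt_id (0:ℝ)).const_mul (c/2))
    simpa [Function.comp_def] using this
  have hslope := hasDerivAt_iff_tendsto_slope.mp hd
  have h2 : Tendsto (fun t : ℝ => 2 * (slope (fun s : ℝ => Real.sin (c/2 * s)) 0 t)^2)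
      (nhdsWithin 0 {(0:ℝ)}ᶜ) (nhds (2 * (c/2)^2)) := (hslope.pow 2).const_mul 2
  have heq : ∀ t : ℝ, 2 * (slope (fun s : ℝ => Real.sin (c/2 * s)) 0 t)^2 = (1 - Real.cos (c*t))/t^2 := by
    intro t
    have ha : c*t = 2*(c/2*t) := by ring
    have h1 : Real.cos (c*t) = 1 - 2 * Real.sin (c/2*t)^2 := by
      rw [ha, Real.cos_two_mul]
      have h2 := Real.sin_sq_add_cos_sq (c/2*t)
      linarith
    simp only [slope_fun_def, h1, vsub_eq_sub, smul_eq_mul]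
    rw [mul_zero, Real.sin_zero, sub_zero]
    field_simp
    ring
  have : (fun t : ℝ => 2 * (slope (fun s : ℝ => Real.sin (c/2 * s)) 0 t)^2) = fun t => (1 - Real.cos (c*t))/t^2 := funext heq
  rw [this] at h2
  convert h2 using 2
  ring

set_option maxHeartbeats 1000000 in
/-- Under critical sampling of a signal with circular spatial band of radius `B`
(reference square length `D = 1/(2B)`, hexagonal critical length `D_h = 1/(3B)`),
the dc dispersion ratio of the hexagonal waveguide mesh (with `α_h = 2`) is
`k̃_h(0) = √2/3`: along any unit direction `(u, v)`, the corrected dispersion ratio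
tends to `√2/3` as the spatial frequency tends to `0⁺`. -/
theorem stmt19 (B u v : ℝ) (hB : 0 < B) (huv : u ^ 2 + v ^ 2 = 1)
    (D Dh : ℝ) (hD : D = 1 / (2 * B)) (hDh : Dh = 1 / (3 * B))
    (b : ℝ → ℝ → ℝ)
    (hb : ∀ ξx ξy, b ξx ξy = (8 / 9) * (Real.cos (2 * π * Real.sqrt 3 * Dh * ξx) +
      Real.cos (2 * π * Dh * (Real.sqrt 3 / 2 * ξx + 3 / 2 * ξy)) +
      Real.cos (2 * π * Dh * (Real.sqrt 3 / 2 * ξx - 3 / 2 * ξy))) - 2 / 3) :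
    Filter.Tendsto (fun t : ℝ => (1 / (4 * π * D * t)) *
        Real.arctan (Real.sqrt (4 - (b (t * u) (t * v)) ^ 2) / b (t * u) (t * v)))
      (nhdsWithin 0 (Set.Ioi 0)) (nhds (Real.sqrt 2 / 3)) := by
  have hDh0 : 0 < Dh := by rw [hDh]; positivity
  have hD0 : 0 < D := by rw [hD]; positivity
  have s3 : Real.sqrt 3 ^ 2 = 3 := Real.sq_sqrt (by norm_num)
  set c1 : ℝ := 2 * π * Real.sqrt 3 * Dh * u with hc1
  set c2 : ℝ := 2 * π * Dh * (Real.sqrt 3 / 2 * u + 3 / 2 * v) with hc2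
  set c3 : ℝ := 2 * π * Dh * (Real.sqrt 3 / 2 * u - 3 / 2 * v) with hc3
  have hbt : ∀ t : ℝ, b (t*u) (t*v) = 8/9 * (Real.cos (c1*t) + Real.cos (c2*t) + Real.cos (c3*t)) - 2/3 := by
    intro t
    rw [hb]
    have e1 : 2 * π * Real.sqrt 3 * Dh * (t*u) = c1 * t := by rw [hc1]; ring
    have e2 : 2 * π * Dh * (Real.sqrt 3 / 2 * (t*u) + 3 / 2 * (t*v)) = c2 * t := by rw [hc2]; ring
    have e3 : 2 * π * Dh * (Real.sqrt 3 / 2 * (t*u) - 3 / 2 * (t*v)) = c3 * t := by rw [hc3]; ring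
    rw [e1, e2, e3]
  -- sum of squares
  have hsum : c1^2 + c2^2 + c3^2 = 18 * π^2 * Dh^2 := by
    rw [hc1, hc2, hc3]
    linear_combination (6*π^2*Dh^2*u^2) * s3 + (18*π^2*Dh^2) * huv
  -- limit of (2-b)/t^2
  have hmono : nhdsWithin (0:ℝ) (Set.Ioi 0) ≤ nhdsWithin 0 {(0:ℝ)}ᶜ :=
    nhdsWithin_mono 0 (fun x hx => ne_of_gt hx)
  have hQ : Tendsto (fun t : ℝ => (2 - b (t*u) (t*v))/t^2) (nhdsWithin 0 (Set.Ioi 0)) (nhds (8*π^2*Dh^2)) := by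
    have h := (((keylim19 c1).add (keylim19 c2)).add (keylim19 c3)).const_mul (8/9 : ℝ)
    have heq : (fun t : ℝ => (8/9 : ℝ) * ((1 - Real.cos (c1*t))/t^2 + (1 - Real.cos (c2*t))/t^2 + (1 - Real.cos (c3*t))/t^2))
        = fun t => (2 - b (t*u) (t*v))/t^2 := by
      funext t
      rw [hbt t]
      ring
    rw [heq] at h
    have hval : (8/9 : ℝ) * (c1^2/2 + c2^2/2 + c3^2/2) = 8*π^2*Dh^2 := by
      linear_combination (4/9 : ℝ) * hsum
    rw [hval] at h
    exact h.mono_left hmono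
  -- b tends to 2
  have ht2 : Tendsto (fun t : ℝ => t^2) (nhdsWithin (0:ℝ) (Set.Ioi 0)) (nhds 0) := by
    have := (continuous_pow 2).tendsto (0:ℝ)
    simpa using this.mono_left nhdsWithin_le_nhds
  have hb2 : Tendsto (fun t : ℝ => b (t*u) (t*v)) (nhdsWithin (0:ℝ) (Set.Ioi 0)) (nhds 2) := by
    have h := hQ.mul ht2
    rw [mul_zero] at h
    have h2 : Tendsto (fun t : ℝ => 2 - (2 - b (t*u) (t*v))/t^2 * t^2) (nhdsWithin (0:ℝ) (Set.Ioi 0)) (nhds (2 - 0)) :=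
      tendsto_const_nhds.sub h
    rw [sub_zero] at h2
    refine h2.congr' ?_
    filter_upwards [self_mem_nhdsWithin] with t ht
    have ht0 : (t:ℝ) ≠ 0 := ne_of_gt ht
    field_simp
    ring
  -- eventually b > 1
  have hbgt : ∀ᶠ t in nhdsWithin (0:ℝ) (Set.Ioi 0), 1 < b (t*u) (t*v) :=
    hb2.eventually (eventually_gt_nhds (by norm_num))
  -- eventually b < 2
  have hπ0 : (π:ℝ) ≠ 0 := Real.pi_ne_zero
  have hblt : ∀ᶠ t in nhdsWithin (0:ℝ) (Set.Ioi 0), b (t*u) (t*v) < 2 := by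
    have hcex : c1 ≠ 0 ∨ c2 ≠ 0 := by
      rcases eq_or_ne u 0 with hu | hu
      · right
        rw [hc2, hu]
        have hv : v ≠ 0 := by intro hv; rw [hu, hv] at huv; norm_num at huv
        simp only [mul_zero, zero_add]
        positivity
      · left
        rw [hc1]
        have h3 : Real.sqrt 3 ≠ 0 := by positivity
        positivity
    obtain ⟨c, hcne, hcmem⟩ : ∃ c : ℝ, c ≠ 0 ∧ (c = c1 ∨ c = c2) := by
      rcases hcex with h | h
      · exact ⟨c1, h, Or.inl rfl⟩
      · exact ⟨c2, h, Or.inr rfl⟩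
    have hmem : Set.Ioo (0:ℝ) (π/|c|) ∈ nhdsWithin (0:ℝ) (Set.Ioi 0) := by
      apply Ioo_mem_nhdsGT_of_mem
      exact ⟨le_refl 0, div_pos Real.pi_pos (abs_pos.mpr hcne)⟩
    filter_upwards [hmem] with t ht
    have hcoslt : Real.cos (c*t) < 1 := by
      rw [← Real.cos_abs]
      have habs : |c*t| = |c| * t := by rw [abs_mul, abs_of_pos ht.1]
      have h1 : 0 < |c| * t := mul_pos (abs_pos.mpr hcne) ht.1
      have h2 : |c| * t < π := by
        have := ht.2
        calc |c| * t < |c| * (π/|c|) := by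
              apply mul_lt_mul_of_pos_left ht.2 (abs_pos.mpr hcne)
          _ = π := by field_simp
      have hid : Real.cos |c*t| = 1 - 2 * Real.sin (|c*t|/2)^2 := by
        have h := Real.cos_two_mul (|c*t|/2)
        have h2 := Real.sin_sq_add_cos_sq (|c*t|/2)
        rw [show 2*(|c*t|/2) = |c*t| by ring] at h
        linarith
      rw [hid]
      have : (0:ℝ) < 2 * Real.sin (|c*t|/2)^2 := by
        have hs : 0 < Real.sin (|c*t|/2) := by
          apply Real.sin_pos_of_pos_of_lt_pi
          · rw [habs]; linarith
          · rw [habs]; linarith [Real.pi_pos]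
        nlinarith
      linarith
    have hle1 := Real.cos_le_one (c1*t)
    have hle2 := Real.cos_le_one (c2*t)
    have hle3 := Real.cos_le_one (c3*t)
    rw [hbt t]
    rcases hcmem with h | h <;> subst h <;> nlinarith
  -- eventually 0 < 4 - b^2, 0 < b, etc.
  have hfacts : ∀ᶠ t in nhdsWithin (0:ℝ) (Set.Ioi 0),
      0 < b (t*u) (t*v) ∧ 0 < 4 - b (t*u) (t*v)^2 ∧ 0 < t := by
    filter_upwards [hbgt, hblt, self_mem_nhdsWithin] with t h1 h2 h3
    refine ⟨by linarith, by nlinarith, h3⟩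
  set X : ℝ → ℝ := fun t => Real.sqrt (4 - (b (t*u) (t*v))^2) / b (t*u) (t*v) with hX
  have s2 : Real.sqrt 2 ^ 2 = 2 := Real.sq_sqrt (by norm_num)
  -- limit of X t / t
  have hXdivt : Tendsto (fun t : ℝ => X t / t) (nhdsWithin (0:ℝ) (Set.Ioi 0)) (nhds (2*Real.sqrt 2*π*Dh)) := by
    have hin : Tendsto (fun t : ℝ => ((2 - b (t*u) (t*v))/t^2) * (2 + b (t*u) (t*v)))
        (nhdsWithin (0:ℝ) (Set.Ioi 0)) (nhds (8*π^2*Dh^2 * 4)) := by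
      have h4 : Tendsto (fun t : ℝ => 2 + b (t*u) (t*v)) (nhdsWithin (0:ℝ) (Set.Ioi 0)) (nhds 4) := by
        have h := hb2.const_add (2:ℝ)
        have e : (2:ℝ) + 2 = 4 := by norm_num
        rw [e] at h
        exact h
      exact hQ.mul h4
    have hsq : Tendsto (fun t : ℝ => Real.sqrt (((2 - b (t*u) (t*v))/t^2) * (2 + b (t*u) (t*v))))
        (nhdsWithin (0:ℝ) (Set.Ioi 0)) (nhds (4*Real.sqrt 2*π*Dh)) := by
      have h := (Real.continuous_sqrt.tendsto _).comp hin
      have hval : Real.sqrt (8*π^2*Dh^2 * 4) = 4*Real.sqrt 2*π*Dh := by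
        rw [show (8:ℝ)*π^2*Dh^2*4 = (4*Real.sqrt 2*π*Dh)^2 by linear_combination (-16*π^2*Dh^2) * s2]
        exact Real.sqrt_sq (by positivity)
      rw [hval] at h
      exact h
    have hdiv := hsq.div hb2 (by norm_num : (2:ℝ) ≠ 0)
    have hval2 : 4*Real.sqrt 2*π*Dh/2 = 2*Real.sqrt 2*π*Dh := by ring
    rw [hval2] at hdiv
    refine hdiv.congr' ?_
    filter_upwards [hfacts] with t ⟨hb0, h4b, ht0⟩
    have htne : (t:ℝ) ≠ 0 := ne_of_gt ht0
    have hbne : b (t*u) (t*v) ≠ 0 := ne_of_gt hb0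
    simp only [Pi.div_apply]
    have e1 : ((2 - b (t*u) (t*v))/t^2) * (2 + b (t*u) (t*v)) = (4 - b (t*u) (t*v)^2)/t^2 := by
      field_simp
      ring
    rw [e1, Real.sqrt_div (by linarith : (0:ℝ) ≤ 4 - b (t*u) (t*v)^2), Real.sqrt_sq (le_of_lt ht0)]
    simp only [hX]
    rw [div_right_comm]
  -- X tends to 0
  have hX0 : Tendsto X (nhdsWithin (0:ℝ) (Set.Ioi 0)) (nhds 0) := by
    have hid : Tendsto (fun t : ℝ => t) (nhdsWithin (0:ℝ) (Set.Ioi 0)) (nhds 0) :=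
      (continuous_id.tendsto 0).mono_left nhdsWithin_le_nhds
    have h := hXdivt.mul hid
    rw [mul_zero] at h
    refine h.congr' ?_
    filter_upwards [self_mem_nhdsWithin] with t ht
    have htne : (t:ℝ) ≠ 0 := ne_of_gt ht
    field_simp
  -- X eventually nonzero
  have hXne : ∀ᶠ t in nhdsWithin (0:ℝ) (Set.Ioi 0), X t ≠ 0 := by
    filter_upwards [hfacts] with t ⟨hb0, h4b, ht0⟩
    have : 0 < X t := div_pos (Real.sqrt_pos.mpr h4b) hb0
    exact ne_of_gt this
  -- arctan (X t) / X t tends to 1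
  have harct : Tendsto (fun t : ℝ => Real.arctan (X t) / X t) (nhdsWithin (0:ℝ) (Set.Ioi 0)) (nhds 1) := by
    have hda : HasDerivAt Real.arctan 1 0 := by
      have := Real.hasDerivAt_arctan 0
      norm_num at this
      exact this
    have hsl := hasDerivAt_iff_tendsto_slope.mp hda
    have hXto : Tendsto X (nhdsWithin (0:ℝ) (Set.Ioi 0)) (nhdsWithin 0 {(0:ℝ)}ᶜ) := by
      rw [tendsto_nhdsWithin_iff]
      exact ⟨hX0, hXne⟩
    have h := hsl.comp hXto
    refine h.congr ?_
    intro t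
    simp [slope_def_field, Real.arctan_zero, Function.comp]
  -- final assembly
  have hfin := (harct.mul hXdivt).const_mul ((1:ℝ)/(4*π*D))
  have hval3 : (1:ℝ)/(4*π*D) * (1 * (2*Real.sqrt 2*π*Dh)) = Real.sqrt 2 / 3 := by
    rw [hD, hDh]
    have hB' : (B:ℝ) ≠ 0 := ne_of_gt hB
    field_simp
    ring
  rw [hval3] at hfin
  refine hfin.congr' ?_
  filter_upwards [hfacts, hXne] with t ⟨hb0, h4b, ht0⟩ hXt
  have htne : (t:ℝ) ≠ 0 := ne_of_gt ht0
  have hDne : D ≠ 0 := ne_of_gt hD0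
  rw [hX]
  field_simp
end
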